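/- Let F be a real normed vector space, let f_1, …, f_m ∈ F, and for each segment k let g_{i,j,k} (i ∈ {1,…,p_k}, j ∈ {1,…,q_{i,k}}) be nonzero real numbers. Define B_k to be the DNF condition ∃ i ∀ j, g_{i,j,k} < 0, and suppose there is exactly one index k* for which B_{k*} holds. Then the iterated limit lim_{ζ→∞} lim_{s→∞} ∑_{k=1}^{m} tanh(ζ · ∑_{i=1}^{p_k} ∏_{j=1}^{q_{i,k}} σ_s(g_{i,j,k})) • f_k equals f_{k*}; i.e., the smoothed GRASHS right-hand side converges to the dynamics of the unique active flight segment. -/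

import Mathlib

open Filter

/-- The sigmoid function with slope parameter `s`. -/
noncomputable def sigmoid (s x : ℝ) : ℝ := 1 / (1 + Real.exp (s * x))

lemma continuous_tanh' : Continuous Real.tanh := by
  have : Real.tanh = fun x => Real.sinh x / Real.cosh x := by
    funext x; exact Real.tanh_eq_sinh_div_cosh x
  rw [this]
  exact Real.continuous_sinh.div Real.continuous_cosh fun x => (Real.cosh_pos x).ne'

lemma tanh_formula (x : ℝ) :
    Real.tanh x = (1 - Real.exp (-2 * x)) / (1 + Real.exp (-2 * x)) := by
  have h2 : (0:ℝ) < 1 + Real.exp (-2 * x) := by positivity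
  have h3 : (0:ℝ) < Real.exp x + Real.exp (-x) := by positivity
  rw [Real.tanh_eq_sinh_div_cosh, Real.sinh_eq, Real.cosh_eq]
  have h4 : (Real.exp x - Real.exp (-x)) / 2 / ((Real.exp x + Real.exp (-x)) / 2)
      = (Real.exp x - Real.exp (-x)) / (Real.exp x + Real.exp (-x)) := by
    field_simp
  rw [h4, div_eq_div_iff h3.ne' h2.ne']
  have hx2 : Real.exp x * Real.exp (-2 * x) = Real.exp (-x) := by
    rw [← Real.exp_add]; ring_nf
  have hx3 : Real.exp (-x) * Real.exp (-2 * x) = Real.exp (-(3*x)) := by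
    rw [← Real.exp_add]; ring_nf
  nlinarith [hx2, hx3]

lemma tanh_tendsto : Tendsto Real.tanh atTop (nhds 1) := by
  have h : Tendsto (fun x : ℝ => Real.exp (-2 * x)) atTop (nhds 0) := by
    exact Real.tendsto_exp_atBot.comp
      ((tendsto_const_mul_atBot_of_neg (by norm_num : (-2:ℝ) < 0)).mpr tendsto_id)
  have : Tendsto (fun x : ℝ => (1 - Real.exp (-2 * x)) / (1 + Real.exp (-2 * x)))
      atTop (nhds ((1 - 0) / (1 + 0))) :=
    ((tendsto_const_nhds.sub h).div (tendsto_const_nhds.add h) (by norm_num))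
  simp only [sub_zero, add_zero, div_one] at this
  exact this.congr fun x => (tanh_formula x).symm

lemma sigmoid_tendsto (x : ℝ) (hx : x ≠ 0) :
    Tendsto (fun s => sigmoid s x) atTop (nhds (if x < 0 then 1 else 0)) := by
  rcases lt_or_gt_of_ne hx with h | h
  · rw [if_pos h]
    have hmul : Tendsto (fun s : ℝ => s * x) atTop atBot :=
      (tendsto_mul_const_atBot_of_neg h).mpr tendsto_id
    have he : Tendsto (fun s : ℝ => Real.exp (s * x)) atTop (nhds 0) :=
      Real.tendsto_exp_atBot.comp hmul
    have he' : Tendsto (fun s : ℝ => 1 + Real.exp (s * x)) atTop (nhds (1 + 0)) :=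
      tendsto_const_nhds.add he
    have := he'.inv₀ (by norm_num)
    simpa [sigmoid, one_div] using this
  · rw [if_neg (not_lt.mpr h.le)]
    have hmul : Tendsto (fun s : ℝ => s * x) atTop atTop :=
      tendsto_id.atTop_mul_const h
    have he : Tendsto (fun s : ℝ => 1 + Real.exp (s * x)) atTop atTop :=
      tendsto_atTop_add_const_left _ 1 (Real.tendsto_exp_atTop.comp hmul)
    have := he.inv_tendsto_atTop
    simp only [sigmoid, one_div]; exact this

theorem grashs_rhs_tendsto_active_segment
    {F : Type*} [NormedAddCommGroup F] [NormedSpace ℝ F]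
    (m : ℕ) (f : Fin m → F)
    (pk : Fin m → ℕ) (qk : (k : Fin m) → Fin (pk k) → ℕ)
    (g : (k : Fin m) → (i : Fin (pk k)) → Fin (qk k i) → ℝ)
    (hg : ∀ k i j, g k i j ≠ 0)
    (kstar : Fin m)
    (hB : ∀ k : Fin m,
      (∃ i : Fin (pk k), ∀ j : Fin (qk k i), g k i j < 0) ↔ k = kstar) :
    ∃ L : ℝ → F,
      (∀ ζ : ℝ, Tendsto
        (fun s : ℝ => ∑ k : Fin m,
          Real.tanh (ζ * ∑ i : Fin (pk k), ∏ j : Fin (qk k i),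
            sigmoid s (g k i j)) • f k)
        atTop (nhds (L ζ))) ∧
      Tendsto L atTop (nhds (f kstar)) := by
  classical
  set N : Fin m → ℝ := fun k => ∑ i : Fin (pk k),
    (if ∀ j : Fin (qk k i), g k i j < 0 then (1:ℝ) else 0) with hN
  refine ⟨fun ζ => ∑ k : Fin m, Real.tanh (ζ * N k) • f k, ?_, ?_⟩
  · intro ζ
    apply tendsto_finset_sum
    intro k _
    apply Tendsto.smul_const
    apply (continuous_tanh'.tendsto _).comp
    apply Tendsto.const_mul
    apply tendsto_finset_sum
    intro i _
    have hp : Tendsto (fun s => ∏ j : Fin (qk k i), sigmoid s (g k i j)) atTop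
        (nhds (∏ j : Fin (qk k i), if g k i j < 0 then (1:ℝ) else 0)) :=
      tendsto_finset_prod _ fun j _ => sigmoid_tendsto _ (hg k i j)
    convert hp using 2
    by_cases h : ∀ j : Fin (qk k i), g k i j < 0
    · rw [if_pos h, Finset.prod_eq_one]
      intro j _; rw [if_pos (h j)]
    · rw [if_neg h]
      push_neg at h
      obtain ⟨j, hj⟩ := h
      exact (Finset.prod_eq_zero (Finset.mem_univ j)
        (show (if g k i j < 0 then (1:ℝ) else 0) = 0 from if_neg (not_lt.mpr hj))).symm
  · have hNk : ∀ k, k ≠ kstar → N k = 0 := by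
      intro k hk
      rw [hN]
      apply Finset.sum_eq_zero
      intro i _
      rw [if_neg]
      intro h
      exact hk ((hB k).mp ⟨i, h⟩)
    have hNs : 0 < N kstar := by
      obtain ⟨i, hi⟩ := (hB kstar).mpr rfl
      rw [hN]
      apply Finset.sum_pos'
      · intro i' _; positivity
      · exact ⟨i, Finset.mem_univ i, by rw [if_pos hi]; norm_num⟩
    have : Tendsto (fun ζ : ℝ => ∑ k : Fin m, Real.tanh (ζ * N k) • f k) atTop
        (nhds (∑ k : Fin m, (if k = kstar then (1:ℝ) else 0) • f k)) := by
      apply tendsto_finset_sum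
      intro k _
      apply Tendsto.smul_const
      by_cases hk : k = kstar
      · subst hk
        rw [if_pos rfl]
        exact tanh_tendsto.comp (tendsto_id.atTop_mul_const hNs)
      · rw [if_neg hk, hNk k hk]
        simp only [mul_zero, Real.tanh_zero]
        exact tendsto_const_nhds
    simpa [Finset.sum_ite_eq'] using this
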